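/- Let Cn > 0, ρ1, ρ2 > 0 and p∞ ∈ ℝ, and set β = (ρ1−ρ2)/(ρ1+ρ2). Define φ(s) = tanh(s/(√2·Cn)), p(s) = p∞·(1 + β·φ(s)), and μ = −p∞·β. Then for every s ∈ ℝ one has ρ̂(φ(s)) > 0 and the pair (φ, p, μ) solves the stationary planar-interface system: (i) p'(s) − (p(s)/ρ̂(φ(s)))·((ρ1−ρ2)/2)·φ'(s) = 0, and (ii) μ − (1/Cn)·f'(φ(s)) + Cn·φ''(s) + (p(s)/ρ̂(φ(s)))·((ρ1−ρ2)/2) = 0, where (ρ1−ρ2)/2 = dρ̂/dφ. -/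

import Mathlib

/-- The truncated double-well potential. -/
noncomputable def doubleWell (φ : ℝ) : ℝ :=
  if φ < -1 then (φ + 1) ^ 2
  else if φ ≤ 1 then (1 / 4) * (φ ^ 2 - 1) ^ 2
  else (φ - 1) ^ 2

/-- Mixture density `ρ̂(φ) = ρ1·(1+φ)/2 + ρ2·(1−φ)/2`. -/
noncomputable def mixDensity (ρ1 ρ2 φ : ℝ) : ℝ := ρ1 * (1 + φ) / 2 + ρ2 * (1 - φ) / 2

lemma my_hasDerivAt_tanh (x : ℝ) : HasDerivAt Real.tanh (1 - Real.tanh x ^ 2) x := by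
  have h := (Real.hasDerivAt_sinh x).div (Real.hasDerivAt_cosh x) (Real.cosh_pos x).ne'
  have he : Real.tanh = fun y => Real.sinh y / Real.cosh y := by
    funext y; exact Real.tanh_eq_sinh_div_cosh y
  rw [he]
  refine h.congr_deriv ?_
  have hc := (Real.cosh_pos x).ne'
  have hs := Real.cosh_sq_sub_sinh_sq x
  field_simp

lemma tanh_sq_lt_one (x : ℝ) : Real.tanh x ^ 2 < 1 := by
  rw [Real.tanh_eq_sinh_div_cosh, div_pow]
  rw [div_lt_one (by positivity)]
  nlinarith [Real.cosh_sq_sub_sinh_sq x]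

lemma deriv_doubleWell_of_mem (y : ℝ) (h1 : -1 < y) (h2 : y < 1) :
    deriv doubleWell y = y ^ 3 - y := by
  have hev : doubleWell =ᶠ[nhds y] fun z => (1 / 4) * (z ^ 2 - 1) ^ 2 := by
    filter_upwards [Ioo_mem_nhds h1 h2] with z hz
    simp only [doubleWell, if_neg (not_lt.2 hz.1.le), if_pos hz.2.le]
  rw [hev.deriv_eq]
  have h : HasDerivAt (fun z : ℝ => (1 / 4) * (z ^ 2 - 1) ^ 2) (y ^ 3 - y) y := by
    have : HasDerivAt (fun z : ℝ => (1 / 4) * (z ^ 2 - 1) ^ 2)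
        ((1 / 4) * (2 * (y ^ 2 - 1) ^ 1 * (2 * y ^ 1))) y := by
      exact (((hasDerivAt_pow 2 y).sub_const 1).pow 2).const_mul (1 / 4)
    convert this using 1; ring
  exact h.deriv

/-- The profile `φ(s) = tanh(s/(√2·Cn))`, pressure `p(s) = pinf·(1 + β·φ(s))` with
`β = (ρ1−ρ2)/(ρ1+ρ2)`, and chemical potential `μ = −pinf·β` solve the stationary
planar-interface system of the quasi-incompressible NSCH model, and `ρ̂(φ(s)) > 0`. -/
theorem stationary_interface_solution (Cn ρ1 ρ2 pinf : ℝ)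
    (hCn : 0 < Cn) (hρ1 : 0 < ρ1) (hρ2 : 0 < ρ2) :
    let β : ℝ := (ρ1 - ρ2) / (ρ1 + ρ2)
    let φ : ℝ → ℝ := fun s => Real.tanh (s / (Real.sqrt 2 * Cn))
    let p : ℝ → ℝ := fun s => pinf * (1 + β * φ s)
    let μ : ℝ := -pinf * β
    ∀ s : ℝ,
      0 < mixDensity ρ1 ρ2 (φ s) ∧
      deriv p s - (p s / mixDensity ρ1 ρ2 (φ s)) * ((ρ1 - ρ2) / 2) * deriv φ s = 0 ∧
      μ - (1 / Cn) * deriv doubleWell (φ s) + Cn * deriv (deriv φ) s +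
        (p s / mixDensity ρ1 ρ2 (φ s)) * ((ρ1 - ρ2) / 2) = 0 := by
  intro β φ p μ s
  have hs2 : (0:ℝ) < Real.sqrt 2 := Real.sqrt_pos.2 (by norm_num)
  set c : ℝ := (Real.sqrt 2 * Cn)⁻¹ with hc
  have hcpos : 0 < c := inv_pos.2 (by positivity)
  have hcsq : c ^ 2 = 1 / (2 * Cn ^ 2) := by
    rw [hc, inv_pow, mul_pow, Real.sq_sqrt (by norm_num : (0:ℝ) ≤ 2)]
    field_simp
  -- φ and its derivatives
  have hφdef : φ = fun s => Real.tanh (s * c) := by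
    funext t; simp only [φ, div_eq_mul_inv, hc]
  have hφd : ∀ t : ℝ, HasDerivAt φ ((1 - φ t ^ 2) * c) t := by
    intro t
    rw [hφdef]
    simpa [Function.comp_def] using (my_hasDerivAt_tanh (t * c)).comp t ((hasDerivAt_id t).mul_const c)
  have hderivφ : deriv φ = fun t => (1 - φ t ^ 2) * c := funext fun t => (hφd t).deriv
  have hφdd : deriv (deriv φ) s = -2 * φ s * (1 - φ s ^ 2) * c ^ 2 := by
    rw [hderivφ]
    have h : HasDerivAt (fun t => (1 - φ t ^ 2) * c)
        ((0 - 2 * φ s ^ 1 * ((1 - φ s ^ 2) * c)) * c) s := by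
      exact (((hasDerivAt_const s (1:ℝ)).sub ((hφd s).pow 2)).mul_const c)
    rw [h.deriv]; ring
  -- bounds on φ s
  have hsq : φ s ^ 2 < 1 := tanh_sq_lt_one _
  have habs : |φ s| < 1 := by
    rw [← Real.sqrt_one]
    calc |φ s| = Real.sqrt (φ s ^ 2) := (Real.sqrt_sq_eq_abs _).symm
    _ < Real.sqrt 1 := Real.sqrt_lt_sqrt (sq_nonneg _) (by simpa using hsq)
  obtain ⟨hlo, hhi⟩ := abs_lt.1 habs
  -- density positivity
  have hmix : mixDensity ρ1 ρ2 (φ s) = ρ1 * (1 + φ s) / 2 + ρ2 * (1 - φ s) / 2 := rfl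
  have hρpos : 0 < mixDensity ρ1 ρ2 (φ s) := by
    rw [hmix]; nlinarith
  refine ⟨hρpos, ?_, ?_⟩
  · -- equation (i)
    have hpd : HasDerivAt p (pinf * (β * ((1 - φ s ^ 2) * c))) s := by
      exact (((hφd s).const_mul β).const_add 1).const_mul pinf
    rw [hpd.deriv, hderivφ]
    have hK : p s / mixDensity ρ1 ρ2 (φ s) * ((ρ1 - ρ2) / 2) = pinf * β := by
      have hsum : (0:ℝ) < ρ1 + ρ2 := by linarith
      rw [div_mul_eq_mul_div, div_eq_iff hρpos.ne', hmix]
      simp only [p, β]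
      field_simp
      ring
    rw [hK]; ring
  · -- equation (ii)
    have hdw : deriv doubleWell (φ s) = φ s ^ 3 - φ s := deriv_doubleWell_of_mem _ hlo hhi
    have hK : p s / mixDensity ρ1 ρ2 (φ s) * ((ρ1 - ρ2) / 2) = pinf * β := by
      have hsum : (0:ℝ) < ρ1 + ρ2 := by linarith
      rw [div_mul_eq_mul_div, div_eq_iff hρpos.ne', hmix]
      simp only [p, β]
      field_simp
      ring
    rw [hdw, hφdd, hK, hcsq]
    simp only [μ]
    field_simp
    ring
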